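/- If a finite IB problem's joint distribution matrix decomposes into blocks, then the IB curve has a linear segment of slope 1 at the origin: specifically, when p(x,y) is block-diagonal (up to permutation of rows and columns) with k ≥ 2 blocks, the deterministic encoder assigning each x to the index of its block achieves I(X;X̂) = I(Y;X̂) = H(X̂) > 0, so every point (t·H(X̂), t·H(X̂)) for t ∈ [0,1] lies on the IB curve, and on [0, H(X̂)] the IB curve satisfies I_Y(I_X) = I_X. -/

import Mathlib

open scoped BigOperators
open Real

noncomputable section

namespace IB

variable {X Y Xh : Type} [Fintype X] [Fintype Y] [Fintype Xh]

/-- Marginal `p(x̂) = ∑ₓ p(x̂|x) p(x)`. -/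
def margXh (pX : X → ℝ) (q : X → Xh → ℝ) (xh : Xh) : ℝ :=
  ∑ x, q x xh * pX x

/-- Label marginal `p_Y(y) = ∑ₓ p(y|x) p(x)`. -/
def pYm (pX : X → ℝ) (pYgX : X → Y → ℝ) (y : Y) : ℝ :=
  ∑ x, pYgX x y * pX x

/-- Joint distribution of `(Y, X̂)`. -/
def jointYXh (pX : X → ℝ) (pYgX : X → Y → ℝ) (q : X → Xh → ℝ) (y : Y) (xh : Xh) : ℝ :=
  ∑ x, pYgX x y * q x xh * pX x

/-- Mutual information `I(X; X̂)` of the encoder. -/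
def IX (pX : X → ℝ) (q : X → Xh → ℝ) : ℝ :=
  ∑ x, ∑ xh, pX x * q x xh * Real.log (q x xh / margXh pX q xh)

/-- Mutual information `I(Y; X̂)` of the induced Markov chain `Y — X — X̂`. -/
def IY (pX : X → ℝ) (pYgX : X → Y → ℝ) (q : X → Xh → ℝ) : ℝ :=
  ∑ y, ∑ xh, jointYXh pX pYgX q y xh *
    Real.log (jointYXh pX pYgX q y xh / (pYm pX pYgX y * margXh pX q xh))

/-- `q` is a conditional probability distribution (an encoder). -/
def IsEncoder (q : X → Xh → ℝ) : Prop :=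
  (∀ x xh, 0 ≤ q x xh) ∧ ∀ x, ∑ xh, q x xh = 1

/-- Decoder `p(y|x̂) = ∑ₓ p(y|x) p(x|x̂)`. -/
def dec (pX : X → ℝ) (pYgX : X → Y → ℝ) (q : X → Xh → ℝ) (y : Y) (xh : Xh) : ℝ :=
  (∑ x, pYgX x y * q x xh * pX x) / margXh pX q xh

/-- KL divergence `D_KL[p(y|x) ‖ p(y|x̂)]`. -/
def dkl (pX : X → ℝ) (pYgX : X → Y → ℝ) (q : X → Xh → ℝ) (x : X) (xh : Xh) : ℝ :=
  ∑ y, pYgX x y * Real.log (pYgX x y / dec pX pYgX q y xh)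

/-- IB partition function `Z(x, β)`. -/
def Zf (pX : X → ℝ) (pYgX : X → Y → ℝ) (q : X → Xh → ℝ) (β : ℝ) (x : X) : ℝ :=
  ∑ xh, margXh pX q xh * Real.exp (-β * dkl pX pYgX q x xh)

/-- `q` satisfies the IB fixed-point equations at `β`. -/
def IBRoot (pX : X → ℝ) (pYgX : X → Y → ℝ) (β : ℝ) (q : X → Xh → ℝ) : Prop :=
  ∀ x xh, q x xh = margXh pX q xh / Zf pX pYgX q β x * Real.exp (-β * dkl pX pYgX q x xh)

/-- The IB curve, allowing representation alphabets `Fin T` of arbitrary finite size. -/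
def curveN (pX : X → ℝ) (pYgX : X → Y → ℝ) (c : ℝ) : ℝ :=
  sSup {v : ℝ | ∃ (T : ℕ) (q : X → Fin T → ℝ), IsEncoder q ∧ IX pX q ≤ c ∧ IY pX pYgX q = v}

/-- The deterministic block encoder assigning each `x` to the index of its block. -/
def blockEnc {k : ℕ} (blockX : X → Fin k) : X → Fin k → ℝ :=
  fun x i => if blockX x = i then 1 else 0

/-- Entropy `H(X̂)` of the cluster marginal. -/
def entXh (pX : X → ℝ) (q : X → Xh → ℝ) : ℝ :=
  -∑ xh, margXh pX q xh * Real.log (margXh pX q xh)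

-- auxiliary lemma block (inserted before the theorem)

lemma sub_le_mul_log (a b : ℝ) (ha : 0 ≤ a) (hb : 0 ≤ b) (h : b = 0 → a = 0) :
    a - b ≤ a * Real.log (a / b) := by
  rcases ha.eq_or_lt with h0 | h0
  · simp [← h0]; linarith
  · have hb0 : 0 < b := by
      rcases hb.eq_or_lt with hb0 | hb0
      · exact absurd (h hb0.symm) (by linarith)
      · exact hb0
    have h2 : Real.log (b / a) ≤ b / a - 1 := Real.log_le_sub_one_of_pos (by positivity)
    have h3 : Real.log (a / b) = - Real.log (b / a) := by
      rw [Real.log_div h0.ne' hb0.ne', Real.log_div hb0.ne' h0.ne']; ring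
    have h4 : a * (b / a) = b := by field_simp
    nlinarith [mul_le_mul_of_nonneg_left h2 ha]

lemma fiber_sum {α : Type} [Fintype α] {k : ℕ} (g : α → Fin k) (p : α → ℝ) (f : Fin k → ℝ) :
    ∑ a, p a * f (g a) = ∑ i, (∑ a, if g a = i then p a else 0) * f i := by
  calc ∑ a, p a * f (g a) = ∑ a, ∑ i, (if g a = i then p a * f i else 0) := by
        refine Finset.sum_congr rfl fun a _ => ?_
        rw [Finset.sum_ite_eq]; simp
    _ = ∑ i, ∑ a, (if g a = i then p a * f i else 0) := Finset.sum_comm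
    _ = ∑ i, (∑ a, if g a = i then p a else 0) * f i := by
        refine Finset.sum_congr rfl fun i _ => ?_
        rw [Finset.sum_mul]
        refine Finset.sum_congr rfl fun a _ => ?_
        split <;> simp

lemma pYm_eq (pJ : X → Y → ℝ) (hpX : ∀ x, 0 < ∑ y, pJ x y) (y : Y) :
    pYm (fun x => ∑ y, pJ x y) (fun x y => pJ x y / ∑ y', pJ x y') y = ∑ x, pJ x y := by
  unfold pYm
  exact Finset.sum_congr rfl fun x _ => div_mul_cancel₀ _ (hpX x).ne'

lemma jointYXh_eq (pJ : X → Y → ℝ) (hpX : ∀ x, 0 < ∑ y, pJ x y)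
    (q : X → Xh → ℝ) (y : Y) (z : Xh) :
    jointYXh (fun x => ∑ y, pJ x y) (fun x y => pJ x y / ∑ y', pJ x y') q y z
      = ∑ x, pJ x y * q x z := by
  unfold jointYXh
  refine Finset.sum_congr rfl fun x _ => ?_
  field_simp
  rw [mul_right_comm]
  exact mul_div_cancel_right₀ _ (hpX x).ne'

/-- Data-processing inequality `I(Y;X̂) ≤ I(X;X̂)` for the Markov chain `Y — X — X̂`. -/
lemma dpi (pJ : X → Y → ℝ) (hnn : ∀ x y, 0 ≤ pJ x y) (hpX : ∀ x, 0 < ∑ y, pJ x y)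
    (q : X → Xh → ℝ) (hq : IsEncoder q) :
    IY (fun x => ∑ y, pJ x y) (fun x y => pJ x y / ∑ y', pJ x y') q
      ≤ IX (fun x => ∑ y, pJ x y) q := by
  set pX : X → ℝ := fun x => ∑ y, pJ x y with hpXdef
  set m : Xh → ℝ := margXh pX q with hm
  have hJnn : ∀ y z, (0:ℝ) ≤ ∑ x, pJ x y * q x z := fun y z =>
    Finset.sum_nonneg fun x _ => mul_nonneg (hnn x y) (hq.1 x z)
  have hpYnn : ∀ y, (0:ℝ) ≤ ∑ x, pJ x y := fun y => Finset.sum_nonneg fun x _ => hnn x y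
  have hIX : IX pX q = ∑ y, ∑ z, ∑ x, pJ x y * q x z * Real.log (q x z / m z) := by
    unfold IX
    calc (∑ x, ∑ z, pX x * q x z * Real.log (q x z / m z))
        = ∑ x, ∑ z, ∑ y, pJ x y * q x z * Real.log (q x z / m z) := by
          refine Finset.sum_congr rfl fun x _ => Finset.sum_congr rfl fun z _ => ?_
          rw [hpXdef]
          simp only [Finset.sum_mul]
      _ = ∑ z, ∑ x, ∑ y, pJ x y * q x z * Real.log (q x z / m z) := Finset.sum_comm
      _ = ∑ z, ∑ y, ∑ x, pJ x y * q x z * Real.log (q x z / m z) :=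
          Finset.sum_congr rfl fun z _ => Finset.sum_comm
      _ = ∑ y, ∑ z, ∑ x, pJ x y * q x z * Real.log (q x z / m z) := Finset.sum_comm
  have hIY : IY pX (fun x y => pJ x y / ∑ y', pJ x y') q
      = ∑ y, ∑ z, ∑ x, pJ x y * q x z *
          Real.log ((∑ x', pJ x' y * q x' z) / ((∑ x', pJ x' y) * m z)) := by
    unfold IY
    refine Finset.sum_congr rfl fun y _ => Finset.sum_congr rfl fun z _ => ?_
    rw [jointYXh_eq pJ hpX, pYm_eq pJ hpX]
    simp only [Finset.sum_mul]
    rfl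
  rw [hIX, hIY]
  refine Finset.sum_le_sum fun y _ => ?_
  rcases (hpYnn y).eq_or_lt with hy0 | hy0
  · have hx0 : ∀ x, pJ x y = 0 := fun x =>
      (Finset.sum_eq_zero_iff_of_nonneg (fun x _ => hnn x y)).1 hy0.symm x (Finset.mem_univ x)
    refine le_of_eq ?_
    refine Finset.sum_congr rfl fun z _ => Finset.sum_congr rfl fun x _ => ?_
    simp [hx0 x]
  · have key : ∀ z x, (pJ x y * q x z - pJ x y * ((∑ x', pJ x' y * q x' z) / ∑ x', pJ x' y))
        ≤ pJ x y * q x z * Real.log (q x z / m z)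
          - pJ x y * q x z *
            Real.log ((∑ x', pJ x' y * q x' z) / ((∑ x', pJ x' y) * m z)) := by
      intro z x
      have hann : (0:ℝ) ≤ pJ x y * q x z := mul_nonneg (hnn x y) (hq.1 x z)
      have hbnn : (0:ℝ) ≤ pJ x y * ((∑ x', pJ x' y * q x' z) / ∑ x', pJ x' y) :=
        mul_nonneg (hnn x y) (div_nonneg (hJnn y z) hy0.le)
      rcases hann.eq_or_lt with ha0 | ha0
      · have h1 : pJ x y * q x z = 0 := ha0.symm
        rw [h1]; simp; nlinarith
      · have hpj : 0 < pJ x y := by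
          rcases (hnn x y).eq_or_lt with h | h
          · exfalso; rw [← h, zero_mul] at ha0; exact ha0.false
          · exact h
        have hqz : 0 < q x z := by
          rcases (hq.1 x z).eq_or_lt with h | h
          · exfalso; rw [← h, mul_zero] at ha0; exact ha0.false
          · exact h
        have hJpos : (0:ℝ) < ∑ x', pJ x' y * q x' z :=
          lt_of_lt_of_le ha0 (Finset.single_le_sum
            (fun i _ => mul_nonneg (hnn i y) (hq.1 i z)) (Finset.mem_univ x))
        have hmz : (0:ℝ) < m z := by
          have h1 : (0:ℝ) < q x z * pX x := mul_pos hqz (hpX x)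
          exact lt_of_lt_of_le h1 (Finset.single_le_sum
            (fun i _ => mul_nonneg (hq.1 i z) (hpX i).le) (Finset.mem_univ x))
        have hb0 : (0:ℝ) < pJ x y * ((∑ x', pJ x' y * q x' z) / ∑ x', pJ x' y) :=
          mul_pos hpj (div_pos hJpos hy0)
        have hmain := sub_le_mul_log _ _ hann hbnn (fun h => absurd h hb0.ne')
        have e1 : Real.log ((pJ x y * q x z) /
            (pJ x y * ((∑ x', pJ x' y * q x' z) / ∑ x', pJ x' y)))
            = Real.log (q x z) - Real.log (∑ x', pJ x' y * q x' z)
              + Real.log (∑ x', pJ x' y) := by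
          rw [Real.log_div ha0.ne' hb0.ne', Real.log_mul hpj.ne' hqz.ne',
            Real.log_mul hpj.ne' (div_pos hJpos hy0).ne', Real.log_div hJpos.ne' hy0.ne']
          ring
        have e2 : Real.log (q x z / m z) = Real.log (q x z) - Real.log (m z) :=
          Real.log_div hqz.ne' hmz.ne'
        have e3 : Real.log ((∑ x', pJ x' y * q x' z) / ((∑ x', pJ x' y) * m z))
            = Real.log (∑ x', pJ x' y * q x' z)
              - (Real.log (∑ x', pJ x' y) + Real.log (m z)) := by
          rw [Real.log_div hJpos.ne' (mul_pos hy0 hmz).ne', Real.log_mul hy0.ne' hmz.ne']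
        rw [e1] at hmain
        rw [e2, e3]
        nlinarith [hmain]
    have hsum1 : (∑ z, ∑ x, (pJ x y * q x z
        - pJ x y * ((∑ x', pJ x' y * q x' z) / ∑ x', pJ x' y))) = 0 := by
      have hT1 : (∑ z, ∑ x, pJ x y * q x z) = ∑ x, pJ x y := by
        rw [Finset.sum_comm]
        refine Finset.sum_congr rfl fun x _ => ?_
        rw [← Finset.mul_sum, hq.2 x, mul_one]
      have hT2 : (∑ z, ∑ x, pJ x y * ((∑ x', pJ x' y * q x' z) / ∑ x', pJ x' y))
          = ∑ x, pJ x y := by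
        calc (∑ z, ∑ x, pJ x y * ((∑ x', pJ x' y * q x' z) / ∑ x', pJ x' y))
            = ∑ z, (∑ x, pJ x y) * ((∑ x', pJ x' y * q x' z) / ∑ x', pJ x' y) := by
              refine Finset.sum_congr rfl fun z _ => ?_
              rw [← Finset.sum_mul]
          _ = ∑ z, ∑ x', pJ x' y * q x' z := by
              refine Finset.sum_congr rfl fun z _ => ?_
              rw [mul_comm, div_mul_cancel₀ _ hy0.ne']
          _ = ∑ x, pJ x y := hT1
      simp only [Finset.sum_sub_distrib]
      rw [hT1, hT2, sub_self]
    have h1 : (0:ℝ) ≤ ∑ z, ∑ x, (pJ x y * q x z * Real.log (q x z / m z)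
        - pJ x y * q x z *
          Real.log ((∑ x', pJ x' y * q x' z) / ((∑ x', pJ x' y) * m z))) := by
      rw [← hsum1]
      exact Finset.sum_le_sum fun z _ => Finset.sum_le_sum fun x _ => key z x
    simp only [Finset.sum_sub_distrib] at h1
    linarith


lemma margXh_blockEnc (pX : X → ℝ) {k : ℕ} (blockX : X → Fin k) (i : Fin k) :
    margXh pX (blockEnc blockX) i = ∑ x, if blockX x = i then pX x else 0 := by
  unfold margXh blockEnc
  refine Finset.sum_congr rfl fun x _ => ?_
  split <;> simp

lemma entXh_blockEnc (pX : X → ℝ) {k : ℕ} (blockX : X → Fin k) :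
    entXh pX (blockEnc blockX)
      = -∑ x, pX x * Real.log (margXh pX (blockEnc blockX) (blockX x)) := by
  unfold entXh
  rw [fiber_sum blockX pX (fun i => Real.log (margXh pX (blockEnc blockX) i))]
  congr 1
  refine Finset.sum_congr rfl fun i _ => ?_
  rw [← margXh_blockEnc]

lemma IX_blockEnc (pX : X → ℝ) {k : ℕ} (blockX : X → Fin k) :
    IX pX (blockEnc blockX)
      = -∑ x, pX x * Real.log (margXh pX (blockEnc blockX) (blockX x)) := by
  unfold IX
  have hterm : ∀ x, (∑ i, pX x * blockEnc blockX x i *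
      Real.log (blockEnc blockX x i / margXh pX (blockEnc blockX) i))
      = -(pX x * Real.log (margXh pX (blockEnc blockX) (blockX x))) := by
    intro x
    calc (∑ i, pX x * blockEnc blockX x i *
        Real.log (blockEnc blockX x i / margXh pX (blockEnc blockX) i))
        = ∑ i, (if blockX x = i then
            -(pX x * Real.log (margXh pX (blockEnc blockX) i)) else 0) := by
          refine Finset.sum_congr rfl fun i _ => ?_
          unfold blockEnc
          by_cases h : blockX x = i
          · simp only [h, if_true, mul_one, one_div, Real.log_inv]; ring
          · simp [h]
      _ = -(pX x * Real.log (margXh pX (blockEnc blockX) (blockX x))) := by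
          rw [Finset.sum_ite_eq]; simp
  calc (∑ x, ∑ i, pX x * blockEnc blockX x i *
      Real.log (blockEnc blockX x i / margXh pX (blockEnc blockX) i))
      = ∑ x, -(pX x * Real.log (margXh pX (blockEnc blockX) (blockX x))) :=
        Finset.sum_congr rfl fun x _ => hterm x
    _ = -∑ x, pX x * Real.log (margXh pX (blockEnc blockX) (blockX x)) := by
        rw [← Finset.sum_neg_distrib]

lemma joint_block (pJ : X → Y → ℝ) {k : ℕ} (blockX : X → Fin k) (blockY : Y → Fin k)
    (hblock : ∀ x y, blockX x ≠ blockY y → pJ x y = 0) (y : Y) (i : Fin k) :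
    (∑ x, if blockX x = i then pJ x y else 0)
      = if blockY y = i then (∑ x, pJ x y) else 0 := by
  by_cases hby : blockY y = i
  · simp only [hby, if_true]
    refine Finset.sum_congr rfl fun x _ => ?_
    by_cases hbx : blockX x = i
    · simp [hbx]
    · simp [hbx, hblock x y (by rw [hby]; exact hbx)]
  · simp only [hby, if_false]
    refine Finset.sum_eq_zero fun x _ => ?_
    by_cases hbx : blockX x = i
    · simp [hbx, hblock x y (by rw [hbx]; exact fun h => hby h.symm)]
    · simp [hbx]

lemma vy_eq_w (pJ : X → Y → ℝ) {k : ℕ} (blockX : X → Fin k) (blockY : Y → Fin k)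
    (hblock : ∀ x y, blockX x ≠ blockY y → pJ x y = 0) (i : Fin k) :
    (∑ y, if blockY y = i then (∑ x, pJ x y) else 0)
      = ∑ x, (if blockX x = i then (∑ y, pJ x y) else 0) := by
  calc (∑ y, if blockY y = i then (∑ x, pJ x y) else 0)
      = ∑ y, ∑ x, (if blockY y = i then pJ x y else 0) := by
        refine Finset.sum_congr rfl fun y _ => ?_
        split <;> simp
    _ = ∑ x, ∑ y, (if blockY y = i then pJ x y else 0) := Finset.sum_comm
    _ = ∑ x, (if blockX x = i then (∑ y, pJ x y) else 0) := by
        refine Finset.sum_congr rfl fun x _ => ?_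
        by_cases hbx : blockX x = i
        · simp only [hbx, if_true]
          refine Finset.sum_congr rfl fun y _ => ?_
          by_cases hby : blockY y = i
          · simp [hby]
          · simp [hby, hblock x y (by rw [hbx]; exact fun h => hby h.symm)]
        · simp only [hbx, if_false]
          refine Finset.sum_eq_zero fun y _ => ?_
          by_cases hby : blockY y = i
          · simp [hby, hblock x y (by rw [hby]; exact hbx)]
          · simp [hby]

/-- The `Y`-side grouping identity. -/
lemma entY_eq (pJ : X → Y → ℝ) {k : ℕ} (blockX : X → Fin k) (blockY : Y → Fin k)
    (hblock : ∀ x y, blockX x ≠ blockY y → pJ x y = 0) (f : Fin k → ℝ) :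
    (∑ y, (∑ x, pJ x y) * f (blockY y)) = ∑ x, (∑ y, pJ x y) * f (blockX x) := by
  rw [fiber_sum blockY (fun y => ∑ x, pJ x y) f,
    fiber_sum blockX (fun x => ∑ y, pJ x y) f]
  refine Finset.sum_congr rfl fun i _ => ?_
  rw [vy_eq_w pJ blockX blockY hblock i]

lemma IY_blockEnc (pJ : X → Y → ℝ) (hnn : ∀ x y, 0 ≤ pJ x y)
    (hpX : ∀ x, 0 < ∑ y, pJ x y) {k : ℕ} (blockX : X → Fin k) (blockY : Y → Fin k)
    (hblock : ∀ x y, blockX x ≠ blockY y → pJ x y = 0) :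
    IY (fun x => ∑ y, pJ x y) (fun x y => pJ x y / ∑ y', pJ x y') (blockEnc blockX)
      = -∑ y, (∑ x, pJ x y) *
          Real.log (margXh (fun x => ∑ y, pJ x y) (blockEnc blockX) (blockY y)) := by
  set pX : X → ℝ := fun x => ∑ y, pJ x y with hpXdef
  unfold IY
  have hterm : ∀ y, (∑ i, jointYXh pX (fun x y => pJ x y / ∑ y', pJ x y')
        (blockEnc blockX) y i *
      Real.log (jointYXh pX (fun x y => pJ x y / ∑ y', pJ x y') (blockEnc blockX) y i /
        (pYm pX (fun x y => pJ x y / ∑ y', pJ x y') y * margXh pX (blockEnc blockX) i)))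
      = -((∑ x, pJ x y) * Real.log (margXh pX (blockEnc blockX) (blockY y))) := by
    intro y
    have hJ : ∀ i, jointYXh pX (fun x y => pJ x y / ∑ y', pJ x y') (blockEnc blockX) y i
        = if blockY y = i then (∑ x, pJ x y) else 0 := by
      intro i
      rw [jointYXh_eq pJ hpX]
      rw [← joint_block pJ blockX blockY hblock y i]
      refine Finset.sum_congr rfl fun x _ => ?_
      unfold blockEnc
      split <;> simp
    calc (∑ i, jointYXh pX (fun x y => pJ x y / ∑ y', pJ x y') (blockEnc blockX) y i *
        Real.log (jointYXh pX (fun x y => pJ x y / ∑ y', pJ x y') (blockEnc blockX) y i /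
          (pYm pX (fun x y => pJ x y / ∑ y', pJ x y') y * margXh pX (blockEnc blockX) i)))
        = ∑ i, (if blockY y = i then
            -((∑ x, pJ x y) * Real.log (margXh pX (blockEnc blockX) i)) else 0) := by
          refine Finset.sum_congr rfl fun i _ => ?_
          rw [hJ i, pYm_eq pJ hpX]
          by_cases h : blockY y = i
          · simp only [h, if_true]
            rcases (Finset.sum_nonneg fun x (_ : x ∈ Finset.univ) => hnn x y).eq_or_lt
                with hy0 | hy0
            · rw [← hy0]; ring
            · rw [div_mul_eq_div_div, div_self hy0.ne', one_div, Real.log_inv]; ring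
          · simp [h]
      _ = -((∑ x, pJ x y) * Real.log (margXh pX (blockEnc blockX) (blockY y))) := by
          rw [Finset.sum_ite_eq]; simp
  calc (∑ y, ∑ i, jointYXh pX (fun x y => pJ x y / ∑ y', pJ x y') (blockEnc blockX) y i *
      Real.log (jointYXh pX (fun x y => pJ x y / ∑ y', pJ x y') (blockEnc blockX) y i /
        (pYm pX (fun x y => pJ x y / ∑ y', pJ x y') y * margXh pX (blockEnc blockX) i)))
      = ∑ y, -((∑ x, pJ x y) * Real.log (margXh pX (blockEnc blockX) (blockY y))) :=
        Finset.sum_congr rfl fun y _ => hterm y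
    _ = -∑ y, (∑ x, pJ x y) * Real.log (margXh pX (blockEnc blockX) (blockY y)) := by
        rw [← Finset.sum_neg_distrib]

lemma entY_eq_log (pJ : X → Y → ℝ) {k : ℕ} (blockX : X → Fin k) (blockY : Y → Fin k)
    (hblock : ∀ x y, blockX x ≠ blockY y → pJ x y = 0) :
    (∑ y, (∑ x, pJ x y) *
        Real.log (margXh (fun x => ∑ y, pJ x y) (blockEnc blockX) (blockY y)))
      = ∑ x, (∑ y, pJ x y) *
          Real.log (margXh (fun x => ∑ y, pJ x y) (blockEnc blockX) (blockX x)) :=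
  entY_eq pJ blockX blockY hblock
    (fun i => Real.log (margXh (fun x => ∑ y, pJ x y) (blockEnc blockX) i))


/-- Time-sharing encoder: with weight `t` output the block index, with weight `1-t`
output the extra symbol `Fin.last k`. -/
def mixEnc {k : ℕ} (blockX : X → Fin k) (t : ℝ) : X → Fin (k+1) → ℝ :=
  fun x j => t * (if j = Fin.castSucc (blockX x) then 1 else 0)
    + (1 - t) * (if j = Fin.last k then 1 else 0)

lemma mixEnc_isEncoder {k : ℕ} (blockX : X → Fin k) {t : ℝ} (ht0 : 0 ≤ t) (ht1 : t ≤ 1) :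
    IsEncoder (mixEnc blockX t) := by
  constructor
  · intro x j
    unfold mixEnc
    have h1 : (0:ℝ) ≤ (if j = Fin.castSucc (blockX x) then (1:ℝ) else 0) := by
      split <;> norm_num
    have h2 : (0:ℝ) ≤ (if j = Fin.last k then (1:ℝ) else 0) := by
      split <;> norm_num
    have := mul_nonneg ht0 h1
    have := mul_nonneg (by linarith : (0:ℝ) ≤ 1 - t) h2
    linarith
  · intro x
    unfold mixEnc
    rw [Finset.sum_add_distrib, ← Finset.mul_sum, ← Finset.mul_sum,
      Finset.sum_ite_eq', Finset.sum_ite_eq']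
    simp

lemma margXh_mixEnc {k : ℕ} (blockX : X → Fin k) (t : ℝ) (pX : X → ℝ)
    (hPXsum : ∑ x, pX x = 1) (j : Fin (k+1)) :
    margXh pX (mixEnc blockX t) j
      = t * (∑ x, if j = Fin.castSucc (blockX x) then pX x else 0)
        + (1 - t) * (if j = Fin.last k then 1 else 0) := by
  unfold margXh mixEnc
  have hterm : ∀ x, (t * (if j = Fin.castSucc (blockX x) then (1:ℝ) else 0)
      + (1 - t) * (if j = Fin.last k then (1:ℝ) else 0)) * pX x
      = t * (if j = Fin.castSucc (blockX x) then pX x else 0)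
        + (1 - t) * (if j = Fin.last k then (1:ℝ) else 0) * pX x := by
    intro x
    rw [add_mul, mul_assoc]
    congr 1
    by_cases h1 : j = Fin.castSucc (blockX x) <;> simp [h1]
  rw [Finset.sum_congr rfl fun x _ => hterm x, Finset.sum_add_distrib, ← Finset.mul_sum,
    ← Finset.mul_sum, hPXsum, mul_one]

lemma u_castSucc {k : ℕ} (blockX : X → Fin k) (pX : X → ℝ) (i : Fin k) :
    (∑ x, if Fin.castSucc i = Fin.castSucc (blockX x) then pX x else 0)
      = margXh pX (blockEnc blockX) i := by
  rw [margXh_blockEnc]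
  refine Finset.sum_congr rfl fun x _ => ?_
  congr 1
  simp [Fin.castSucc_inj, eq_comm]

lemma u_last {k : ℕ} (blockX : X → Fin k) (pX : X → ℝ) :
    (∑ x, if Fin.last k = Fin.castSucc (blockX x) then pX x else 0) = 0 := by
  refine Finset.sum_eq_zero fun x _ => ?_
  rw [if_neg]
  exact fun h => (Fin.castSucc_lt_last (blockX x)).ne' h

lemma IX_mixEnc {k : ℕ} (blockX : X → Fin k) {t : ℝ} (ht0 : 0 ≤ t) (ht1 : t ≤ 1)
    (pX : X → ℝ) (hPXsum : ∑ x, pX x = 1) :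
    IX pX (mixEnc blockX t)
      = t * (-∑ x, pX x * Real.log (margXh pX (blockEnc blockX) (blockX x))) := by
  unfold IX
  have hterm : ∀ x j, pX x * mixEnc blockX t x j *
      Real.log (mixEnc blockX t x j / margXh pX (mixEnc blockX t) j)
      = if j = Fin.castSucc (blockX x) then
          t * -(pX x * Real.log (margXh pX (blockEnc blockX) (blockX x))) else 0 := by
    intro x j
    by_cases h1 : j = Fin.castSucc (blockX x)
    · subst h1
      have hne : Fin.castSucc (blockX x) ≠ Fin.last k := (Fin.castSucc_lt_last _).ne
      rw [if_pos rfl, margXh_mixEnc blockX t pX hPXsum, u_castSucc blockX pX]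
      unfold mixEnc
      rw [if_pos rfl, if_neg hne]
      rcases ht0.eq_or_lt with ht | ht
      · rw [← ht]; simp
      · simp only [mul_one, mul_zero, add_zero]
        rw [div_mul_eq_div_div, div_self ht.ne', one_div, Real.log_inv]
        ring
    · rw [if_neg h1]
      by_cases h2 : j = Fin.last k
      · subst h2
        rw [margXh_mixEnc blockX t pX hPXsum, u_last blockX pX]
        unfold mixEnc
        rw [if_neg h1, if_pos rfl]
        rcases (by linarith : (0:ℝ) ≤ 1 - t).eq_or_lt with ht | ht
        · rw [← ht]; simp
        · simp only [mul_zero, zero_add, mul_one]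
          rw [div_self ht.ne', Real.log_one, mul_zero]
      · unfold mixEnc
        rw [if_neg h1, if_neg h2]
        simp
  calc (∑ x, ∑ j, pX x * mixEnc blockX t x j *
      Real.log (mixEnc blockX t x j / margXh pX (mixEnc blockX t) j))
      = ∑ x, ∑ j, (if j = Fin.castSucc (blockX x) then
          t * -(pX x * Real.log (margXh pX (blockEnc blockX) (blockX x))) else 0) :=
        Finset.sum_congr rfl fun x _ => Finset.sum_congr rfl fun j _ => hterm x j
    _ = ∑ x, t * -(pX x * Real.log (margXh pX (blockEnc blockX) (blockX x))) := by
        refine Finset.sum_congr rfl fun x _ => ?_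
        rw [Finset.sum_ite_eq']; simp
    _ = t * (-∑ x, pX x * Real.log (margXh pX (blockEnc blockX) (blockX x))) := by
        rw [← Finset.mul_sum, Finset.sum_neg_distrib]

lemma sum_mixEnc {k : ℕ} (blockX : X → Fin k) (t : ℝ) (p : X → ℝ) (j : Fin (k+1)) :
    (∑ x, p x * mixEnc blockX t x j)
      = t * (∑ x, if j = Fin.castSucc (blockX x) then p x else 0)
        + (1 - t) * (if j = Fin.last k then 1 else 0) * (∑ x, p x) := by
  unfold mixEnc
  have hterm : ∀ x, p x * (t * (if j = Fin.castSucc (blockX x) then (1:ℝ) else 0)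
      + (1 - t) * (if j = Fin.last k then (1:ℝ) else 0))
      = t * (if j = Fin.castSucc (blockX x) then p x else 0)
        + (1 - t) * (if j = Fin.last k then (1:ℝ) else 0) * p x := by
    intro x
    rw [mul_add]
    congr 1
    · by_cases h1 : j = Fin.castSucc (blockX x) <;> simp [h1, mul_comm]
    · ring
  rw [Finset.sum_congr rfl fun x _ => hterm x, Finset.sum_add_distrib, ← Finset.mul_sum,
    ← Finset.mul_sum]

lemma IY_mixEnc (pJ : X → Y → ℝ) (hnn : ∀ x y, 0 ≤ pJ x y)
    (hpX : ∀ x, 0 < ∑ y, pJ x y) {k : ℕ} (blockX : X → Fin k) (blockY : Y → Fin k)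
    (hblock : ∀ x y, blockX x ≠ blockY y → pJ x y = 0)
    (hsum : ∑ x, ∑ y, pJ x y = 1)
    {t : ℝ} (ht0 : 0 ≤ t) (ht1 : t ≤ 1) :
    IY (fun x => ∑ y, pJ x y) (fun x y => pJ x y / ∑ y', pJ x y') (mixEnc blockX t)
      = t * (-∑ y, (∑ x, pJ x y) *
          Real.log (margXh (fun x => ∑ y, pJ x y) (blockEnc blockX) (blockY y))) := by
  set pX : X → ℝ := fun x => ∑ y, pJ x y with hpXdef
  have hjs : ∀ (y : Y) (i : Fin k),
      (∑ x, if Fin.castSucc i = Fin.castSucc (blockX x) then pJ x y else 0)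
        = if blockY y = i then (∑ x, pJ x y) else 0 := by
    intro y i
    rw [← joint_block pJ blockX blockY hblock y i]
    refine Finset.sum_congr rfl fun x _ => ?_
    congr 1
    simp [Fin.castSucc_inj, eq_comm]
  have hjl : ∀ y : Y, (∑ x, if Fin.last k = Fin.castSucc (blockX x) then pJ x y else 0)
      = 0 := by
    intro y
    refine Finset.sum_eq_zero fun x _ => ?_
    rw [if_neg]
    exact fun h => (Fin.castSucc_lt_last (blockX x)).ne' h
  have hterm : ∀ (y : Y) (j : Fin (k+1)),
      (∑ x, pJ x y * mixEnc blockX t x j) *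
        Real.log ((∑ x, pJ x y * mixEnc blockX t x j) /
          ((∑ x, pJ x y) * margXh pX (mixEnc blockX t) j))
      = if j = Fin.castSucc (blockY y) then
          t * -((∑ x, pJ x y) * Real.log (margXh pX (blockEnc blockX) (blockY y))) else 0 := by
    intro y j
    have hpy : (0:ℝ) ≤ ∑ x, pJ x y := Finset.sum_nonneg fun x _ => hnn x y
    have hm' : margXh pX (mixEnc blockX t) j
        = t * (∑ x, if j = Fin.castSucc (blockX x) then pX x else 0)
          + (1 - t) * (if j = Fin.last k then 1 else 0) := by
      have h1 : margXh pX (mixEnc blockX t) j = ∑ x, pX x * mixEnc blockX t x j := by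
        unfold margXh
        exact Finset.sum_congr rfl fun x _ => mul_comm _ _
      rw [h1, sum_mixEnc, show (∑ x, pX x) = 1 from hsum, mul_one]
    by_cases h2 : j = Fin.last k
    · subst h2
      rw [if_neg (Fin.castSucc_lt_last (blockY y)).ne']
      rw [sum_mixEnc, hjl y, hm', u_last blockX pX]
      simp only [eq_self_iff_true, if_true, mul_zero, zero_add, mul_one]
      rcases (by linarith : (0:ℝ) ≤ 1 - t).eq_or_lt with ht | ht
      · rw [← ht]; simp
      · rcases hpy.eq_or_lt with hy | hy
        · rw [← hy]; simp
        · rw [show ((1 - t) * ∑ x, pJ x y) / ((∑ x, pJ x y) * (1 - t)) = 1 from by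
            rw [mul_comm (∑ x, pJ x y) (1 - t)]
            exact div_self (mul_ne_zero ht.ne' hy.ne')]
          rw [Real.log_one, mul_zero]
    · obtain ⟨i, rfl⟩ := Fin.exists_castSucc_eq.mpr h2
      have hnl : Fin.castSucc i ≠ Fin.last k := (Fin.castSucc_lt_last i).ne
      rw [sum_mixEnc, hjs y i, hm', u_castSucc blockX pX, if_neg hnl]
      simp only [mul_zero, zero_mul, add_zero]
      by_cases hby : blockY y = i
      · subst hby
        rw [if_pos rfl, if_pos rfl]
        rcases ht0.eq_or_lt with ht | ht
        · rw [← ht]; simp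
        · rcases hpy.eq_or_lt with hy | hy
          · rw [← hy]; simp
          · rw [show (∑ x, pJ x y) * (t * margXh pX (blockEnc blockX) (blockY y))
                = (t * ∑ x, pJ x y) * margXh pX (blockEnc blockX) (blockY y) from by ring,
              div_mul_eq_div_div, div_self (mul_ne_zero ht.ne' hy.ne'), one_div,
              Real.log_inv]
            ring
      · rw [if_neg hby, if_neg (fun h => hby (Fin.castSucc_inj.mp h).symm)]
        simp
  have hIYr : IY pX (fun x y => pJ x y / ∑ y', pJ x y') (mixEnc blockX t)
      = ∑ y, ∑ j, (∑ x, pJ x y * mixEnc blockX t x j) *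
          Real.log ((∑ x, pJ x y * mixEnc blockX t x j) /
            ((∑ x, pJ x y) * margXh pX (mixEnc blockX t) j)) := by
    unfold IY
    refine Finset.sum_congr rfl fun y _ => Finset.sum_congr rfl fun j _ => ?_
    rw [jointYXh_eq pJ hpX, pYm_eq pJ hpX]
  rw [hIYr]
  calc (∑ y, ∑ j, (∑ x, pJ x y * mixEnc blockX t x j) *
      Real.log ((∑ x, pJ x y * mixEnc blockX t x j) /
        ((∑ x, pJ x y) * margXh pX (mixEnc blockX t) j)))
      = ∑ y, ∑ j, (if j = Fin.castSucc (blockY y) then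
          t * -((∑ x, pJ x y) * Real.log (margXh pX (blockEnc blockX) (blockY y)))
          else 0) :=
        Finset.sum_congr rfl fun y _ => Finset.sum_congr rfl fun j _ => hterm y j
    _ = ∑ y, t * -((∑ x, pJ x y) * Real.log (margXh pX (blockEnc blockX) (blockY y))) := by
        refine Finset.sum_congr rfl fun y _ => ?_
        rw [Finset.sum_ite_eq']; simp
    _ = t * (-∑ y, (∑ x, pJ x y) * Real.log (margXh pX (blockEnc blockX) (blockY y))) := by
        rw [← Finset.mul_sum, Finset.sum_neg_distrib]


/-- if the joint distribution decomposes into `k ≥ 2` blocks, the block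
encoder achieves `I(X;X̂) = I(Y;X̂) = H(X̂) > 0`, and on `[0, H(X̂)]` the IB curve is
the straight line `I_Y(I_X) = I_X` (a linear segment of slope 1 at the origin). -/
theorem decomposable_gives_linear_segment
    (pJ : X → Y → ℝ) (hnn : ∀ x y, 0 ≤ pJ x y) (hsum : ∑ x, ∑ y, pJ x y = 1)
    (hpX : ∀ x, 0 < ∑ y, pJ x y)
    (k : ℕ) (hk : 2 ≤ k)
    (blockX : X → Fin k) (blockY : Y → Fin k)
    (hsurj : ∀ i, ∃ x, blockX x = i)
    (hblock : ∀ x y, blockX x ≠ blockY y → pJ x y = 0) :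
    IX (fun x => ∑ y, pJ x y) (blockEnc blockX)
      = entXh (fun x => ∑ y, pJ x y) (blockEnc blockX) ∧
    IY (fun x => ∑ y, pJ x y) (fun x y => pJ x y / ∑ y', pJ x y') (blockEnc blockX)
      = entXh (fun x => ∑ y, pJ x y) (blockEnc blockX) ∧
    0 < entXh (fun x => ∑ y, pJ x y) (blockEnc blockX) ∧
    ∀ c ∈ Set.Icc (0 : ℝ) (entXh (fun x => ∑ y, pJ x y) (blockEnc blockX)),
      curveN (fun x => ∑ y, pJ x y) (fun x y => pJ x y / ∑ y', pJ x y') c = c := by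
  have hwpos : ∀ i, 0 < margXh (fun x => ∑ y, pJ x y) (blockEnc blockX) i := by
    intro i
    obtain ⟨x0, hx0⟩ := hsurj i
    rw [margXh_blockEnc]
    have h1 : (if blockX x0 = i then (∑ y, pJ x0 y) else 0)
        ≤ ∑ x, if blockX x = i then (∑ y, pJ x y) else 0 :=
      Finset.single_le_sum (f := fun x => if blockX x = i then (∑ y, pJ x y) else 0)
        (fun x _ => by
          split
          · exact (hpX x).le
          · exact le_rfl) (Finset.mem_univ x0)
    rw [if_pos hx0] at h1
    exact lt_of_lt_of_le (hpX x0) h1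
  have hwsum : ∑ i, margXh (fun x => ∑ y, pJ x y) (blockEnc blockX) i = 1 := by
    calc ∑ i, margXh (fun x => ∑ y, pJ x y) (blockEnc blockX) i
        = ∑ i, ∑ x, (if blockX x = i then (∑ y, pJ x y) else 0) :=
          Finset.sum_congr rfl fun i _ => margXh_blockEnc _ _ _
      _ = ∑ x, ∑ i, (if blockX x = i then (∑ y, pJ x y) else 0) := Finset.sum_comm
      _ = ∑ x, ∑ y, pJ x y := by
          refine Finset.sum_congr rfl fun x _ => ?_
          rw [Finset.sum_ite_eq]; simp
      _ = 1 := hsum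
  have hwlt : ∀ i, margXh (fun x => ∑ y, pJ x y) (blockEnc blockX) i < 1 := by
    intro i
    have hnt : Nontrivial (Fin k) := Fin.nontrivial_iff_two_le.mpr hk
    obtain ⟨j, hj⟩ := exists_ne i
    have h2 := Finset.sum_le_sum_of_subset_of_nonneg
      (Finset.subset_univ ({i, j} : Finset (Fin k))) (fun x _ _ => (hwpos x).le)
    rw [Finset.sum_pair (Ne.symm hj), hwsum] at h2
    linarith [hwpos j]
  have hHpos : 0 < entXh (fun x => ∑ y, pJ x y) (blockEnc blockX) := by
    unfold entXh
    have hneg : (∑ i, margXh (fun x => ∑ y, pJ x y) (blockEnc blockX) i *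
        Real.log (margXh (fun x => ∑ y, pJ x y) (blockEnc blockX) i)) < 0 := by
      have hne : (Finset.univ : Finset (Fin k)).Nonempty :=
        ⟨⟨0, by omega⟩, Finset.mem_univ _⟩
      calc (∑ i, margXh (fun x => ∑ y, pJ x y) (blockEnc blockX) i *
          Real.log (margXh (fun x => ∑ y, pJ x y) (blockEnc blockX) i))
          < ∑ _i : Fin k, (0:ℝ) :=
            Finset.sum_lt_sum_of_nonempty hne (fun i _ =>
              mul_neg_of_pos_of_neg (hwpos i) (Real.log_neg (hwpos i) (hwlt i)))
        _ = 0 := by simp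
    linarith
  have hIX1 : IX (fun x => ∑ y, pJ x y) (blockEnc blockX)
      = entXh (fun x => ∑ y, pJ x y) (blockEnc blockX) := by
    rw [IX_blockEnc, entXh_blockEnc]
  have hIY1 : IY (fun x => ∑ y, pJ x y) (fun x y => pJ x y / ∑ y', pJ x y') (blockEnc blockX)
      = entXh (fun x => ∑ y, pJ x y) (blockEnc blockX) := by
    rw [IY_blockEnc pJ hnn hpX blockX blockY hblock, entXh_blockEnc]
    rw [entY_eq_log pJ blockX blockY hblock]
  refine ⟨hIX1, hIY1, hHpos, ?_⟩
  intro c hc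
  obtain ⟨hc0, hc1⟩ := hc
  set H := entXh (fun x => ∑ y, pJ x y) (blockEnc blockX) with hHdef
  have ht0 : 0 ≤ c / H := div_nonneg hc0 hHpos.le
  have ht1 : c / H ≤ 1 := (div_le_one hHpos).2 hc1
  have hub : ∀ v ∈ {v : ℝ | ∃ (T : ℕ) (q : X → Fin T → ℝ), IsEncoder q ∧
      IX (fun x => ∑ y, pJ x y) q ≤ c ∧
      IY (fun x => ∑ y, pJ x y) (fun x y => pJ x y / ∑ y', pJ x y') q = v}, v ≤ c := by
    rintro v ⟨T, q, henc, hix, rfl⟩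
    exact le_trans (dpi pJ hnn hpX q henc) hix
  have hmem : c ∈ {v : ℝ | ∃ (T : ℕ) (q : X → Fin T → ℝ), IsEncoder q ∧
      IX (fun x => ∑ y, pJ x y) q ≤ c ∧
      IY (fun x => ∑ y, pJ x y) (fun x y => pJ x y / ∑ y', pJ x y') q = v} := by
    refine ⟨k + 1, mixEnc blockX (c / H), mixEnc_isEncoder blockX ht0 ht1, ?_, ?_⟩
    · rw [IX_mixEnc blockX ht0 ht1 (fun x => ∑ y, pJ x y) hsum, ← entXh_blockEnc,
        ← hHdef, div_mul_cancel₀ c hHpos.ne']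
    · rw [IY_mixEnc pJ hnn hpX blockX blockY hblock hsum ht0 ht1,
        entY_eq_log pJ blockX blockY hblock, ← entXh_blockEnc, ← hHdef,
        div_mul_cancel₀ c hHpos.ne']
  unfold curveN
  exact le_antisymm (csSup_le ⟨c, hmem⟩ hub) (le_csSup ⟨c, hub⟩ hmem)


end IB
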